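/- Let μ be a continuous (atomless) Borel measure on a metric space X, finite on closed balls, such that M^c_μ f = M_μ f on supp(μ) for all f ∈ L^1_loc(μ). Then there is no sequence {x_n}_{n≥1} ⊆ supp(μ) such that each x_{n+2} is a metric midpoint of x_n and x_{n+1} (i.e., d(x_n, x_{n+2}) = d(x_{n+1}, x_{n+2}) = d(x_n, x_{n+1})/2, with all x_n distinct) and x_n converges to some x_0 ∈ supp(μ). -/

import Mathlib

open MeasureTheory Metric ENNReal Filter

/-- A set is a (nondegenerate) closed ball. -/
def IsClosedBall {X : Type*} [MetricSpace X] (B : Set X) : Prop :=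
  ∃ (c : X) (r : ℝ), 0 < r ∧ B = Metric.closedBall c r

/-- The support of a measure: points all of whose neighborhoods have positive measure. -/
def suppM {X : Type*} [MetricSpace X] [MeasurableSpace X] (μ : Measure X) : Set X :=
  {x | ∀ r > (0 : ℝ), 0 < μ (Metric.ball x r)}

/-- Average of `f` over a set, declared `0` when the set is `μ`-null. -/
noncomputable def avg {X : Type*} [MetricSpace X] [MeasurableSpace X]
    (μ : Measure X) (f : X → ℝ≥0∞) (B : Set X) : ℝ≥0∞ :=
  if μ B = 0 then 0 else (∫⁻ y in B, f y ∂μ) / μ B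

/-- Centered Hardy–Littlewood maximal function. -/
noncomputable def Mc {X : Type*} [MetricSpace X] [MeasurableSpace X]
    (μ : Measure X) (f : X → ℝ≥0∞) (x : X) : ℝ≥0∞ :=
  ⨆ r > (0 : ℝ), avg μ f (Metric.closedBall x r)

/-- Non-centered Hardy–Littlewood maximal function. -/
noncomputable def Munc {X : Type*} [MetricSpace X] [MeasurableSpace X]
    (μ : Measure X) (f : X → ℝ≥0∞) (x : X) : ℝ≥0∞ :=
  ⨆ B ∈ {B : Set X | IsClosedBall B ∧ x ∈ B}, avg μ f B

/-- Ratio of measures with the convention `0` when the denominator vanishes. -/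
noncomputable def ratio0 {X : Type*} [MeasurableSpace X] (μ ν : MeasureTheory.Measure X) (B : Set X) : ℝ≥0∞ :=
  if μ B = 0 then 0 else ν B / μ B

/-- Centered maximal function of a measure `ν` with respect to `μ`. -/
noncomputable def McMeas {X : Type*} [MetricSpace X] [MeasurableSpace X]
    (μ ν : Measure X) (x : X) : ℝ≥0∞ :=
  ⨆ r > (0 : ℝ), ratio0 μ ν (Metric.closedBall x r)

/-- Non-centered maximal function of a measure `ν` with respect to `μ`. -/
noncomputable def MuncMeas {X : Type*} [MetricSpace X] [MeasurableSpace X]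
    (μ ν : Measure X) (x : X) : ℝ≥0∞ :=
  ⨆ B ∈ {B : Set X | IsClosedBall B ∧ x ∈ B}, ratio0 μ ν B
namespace NoMidSeqAux

variable {X : Type*} [MetricSpace X] [MeasurableSpace X] [BorelSpace X]

lemma lint_ind (μ : Measure X) {A : Set X} (hA : MeasurableSet A) (B : Set X) :
    (∫⁻ y in B, A.indicator (fun _ => (1:ℝ≥0∞)) y ∂μ) = μ (A ∩ B) := by
  rw [lintegral_indicator hA, setLIntegral_one, Measure.restrict_apply hA]

/-- The fundamental test lemma extracted from `Mc = Munc`. -/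
lemma test_lemma (μ : Measure X)
    (hfin : ∀ (c : X) (r : ℝ), μ (closedBall c r) ≠ ∞)
    (hM : ∀ f : X → ℝ≥0∞, Measurable f →
      (∀ (c : X) (r : ℝ), (∫⁻ z in closedBall c r, f z ∂μ) ≠ ∞) →
      ∀ z ∈ suppM μ, Mc μ f z = Munc μ f z)
    {p c : X} {A : Set X} (hA : MeasurableSet A) (hApos : 0 < μ A)
    {ρ s : ℝ} (hρ : 0 < ρ) (hs : 0 < s)
    (hp : p ∈ suppM μ)
    (hfar : ∀ y ∈ A, ρ ≤ dist p y)
    (hAB : A ⊆ closedBall c s) (hpB : p ∈ closedBall c s) :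
    μ (closedBall p ρ) ≤ μ (closedBall c s) := by
  set f : X → ℝ≥0∞ := A.indicator (fun _ => (1:ℝ≥0∞)) with hf
  have hfm : Measurable f := measurable_const.indicator hA
  have hBtop : μ (closedBall c s) ≠ ∞ := hfin c s
  have hAtop : μ A ≠ ∞ := fun h => hBtop (top_le_iff.mp (h ▸ measure_mono hAB))
  have hint : ∀ (c' : X) (r' : ℝ), (∫⁻ z in closedBall c' r', f z ∂μ) ≠ ∞ := by
    intro c' r'
    rw [hf, lint_ind μ hA]
    exact fun h => hAtop (top_le_iff.mp (h ▸ measure_mono Set.inter_subset_left))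
  have heq := hM f hfm hint p hp
  have hμB0 : μ (closedBall c s) ≠ 0 := (lt_of_lt_of_le hApos (measure_mono hAB)).ne'
  have hKpos : 0 < μ (closedBall p ρ) := lt_of_lt_of_le (hp ρ hρ) (measure_mono ball_subset_closedBall)
  have hKtop : μ (closedBall p ρ) ≠ ∞ := hfin p ρ
  -- lower bound for Munc
  have h1 : μ A / μ (closedBall c s) ≤ Munc μ f p := by
    have hBmem : closedBall c s ∈ {B : Set X | IsClosedBall B ∧ p ∈ B} := ⟨⟨c, s, hs, rfl⟩, hpB⟩
    have havg : avg μ f (closedBall c s) = μ A / μ (closedBall c s) := by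
      rw [avg, if_neg hμB0, hf, lint_ind μ hA, Set.inter_eq_self_of_subset_left hAB]
    exact havg ▸ le_biSup _ hBmem
  -- upper bound for Mc
  have h2 : Mc μ f p ≤ μ A / μ (closedBall p ρ) := by
    rw [Mc]
    refine iSup₂_le fun r hr => ?_
    rw [avg]
    split_ifs with h0
    · exact zero_le
    rw [hf, lint_ind μ hA]
    rcases le_or_gt ρ r with hle | hlt
    · exact ENNReal.div_le_div (measure_mono Set.inter_subset_left)
        (measure_mono (closedBall_subset_closedBall hle))
    · have hempty : A ∩ closedBall p r = ∅ := by
        ext y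
        simp only [Set.mem_inter_iff, Set.mem_empty_iff_false, iff_false, not_and]
        intro hyA hyB
        have h1 := hfar y hyA
        have h2 : dist p y ≤ r := by rw [dist_comm]; exact mem_closedBall.mp hyB
        linarith
      rw [hempty]
      simp
  have h3 : μ A / μ (closedBall c s) ≤ μ A / μ (closedBall p ρ) := by
    calc μ A / μ (closedBall c s) ≤ Munc μ f p := h1
    _ = Mc μ f p := heq.symm
    _ ≤ μ A / μ (closedBall p ρ) := h2
  -- cancel
  have h4 : μ A / μ (closedBall c s) * μ (closedBall p ρ) ≤ μ A :=
    (ENNReal.le_div_iff_mul_le (Or.inl hKpos.ne') (Or.inl hKtop)).mp h3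
  have h5 : μ A / μ (closedBall c s) * μ (closedBall c s) = μ A :=
    ENNReal.div_mul_cancel hμB0 hBtop
  have h6 := h4.trans_eq h5.symm
  exact (ENNReal.mul_le_mul_iff_right (ENNReal.div_ne_zero.mpr ⟨hApos.ne', hBtop⟩)
    (ENNReal.div_lt_top hAtop hμB0).ne).mp h6


/-- If all slightly-shrunk closed balls of radius `α` have measure at most that of the
closed ball of radius `β`, then the open-annulus between them is null. -/
lemma diff_null_of_forall (μ : Measure X)
    (hfin : ∀ (c : X) (r : ℝ), μ (closedBall c r) ≠ ∞) (z : X) {α β : ℝ}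
    (h : ∀ δ : ℝ, 0 < δ → μ (closedBall z (α - δ)) ≤ μ (closedBall z β)) :
    μ (ball z α \ closedBall z β) = 0 := by
  rcases le_or_gt α 0 with hα | hα
  · rw [ball_eq_empty.mpr hα]
    simp
  · have hcover : ball z α \ closedBall z β ⊆
        ⋃ k : ℕ, (closedBall z (α - α / (k + 2)) \ closedBall z β) := by
      rintro y ⟨hy1, hy2⟩
      have hd : dist y z < α := mem_ball.mp hy1
      obtain ⟨k, hk⟩ := exists_nat_gt (α / (α - dist y z))
      refine Set.mem_iUnion.mpr ⟨k, ?_, hy2⟩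
      have hpos : 0 < α - dist y z := by linarith
      have h2 : α / (α - dist y z) < (k : ℝ) + 2 := by
        have : (k:ℝ) ≤ (k:ℝ) + 2 - 2 := by linarith
        linarith
      have h3 : α < ((k:ℝ) + 2) * (α - dist y z) := by
        have := (div_lt_iff₀ hpos).mp h2
        linarith
      have h4 : α / ((k:ℝ) + 2) < α - dist y z := by
        rw [div_lt_iff₀ (by positivity)]
        linarith [h3]
      exact mem_closedBall.mpr (by linarith)
    refine measure_mono_null hcover (measure_iUnion_null fun k => ?_)
    rcases le_or_gt (α - α / (k + 2)) β with hle | hlt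
    · have : closedBall z (α - α / (k + 2)) \ closedBall z β = ∅ := by
        ext y
        simp only [Set.mem_diff, mem_closedBall, Set.mem_empty_iff_false, iff_false, not_and,
          not_not]
        intro h1
        linarith
      rw [this]; simp
    · have hsub : closedBall z β ⊆ closedBall z (α - α / (k + 2)) :=
        closedBall_subset_closedBall hlt.le
      rw [measure_diff hsub measurableSet_closedBall.nullMeasurableSet (hfin z β)]
      exact tsub_eq_zero_of_le (h (α / (k + 2)) (by positivity))

/-- If a positive-measure set is a.e. inside an open ball, some shrunk closed ball still
captures positive measure. -/
lemma pos_inter_shrunk (μ : Measure X) {Dset : Set X} {c : X} {r ηmax : ℝ}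
    (hηmax : 0 < ηmax)
    (hpos : 0 < μ Dset) (hnull : μ (Dset \ ball c r) = 0) :
    ∃ η : ℝ, 0 < η ∧ η ≤ ηmax ∧ 0 < μ (Dset ∩ closedBall c (r - η)) := by
  by_contra hcon
  push_neg at hcon
  have hterm : ∀ k : ℕ, μ (Dset ∩ closedBall c (r - ηmax / (k + 1))) = 0 := by
    intro k
    have h1 : 0 < ηmax / ((k:ℝ) + 1) := by positivity
    have h2 : ηmax / ((k:ℝ) + 1) ≤ ηmax := by
      rw [div_le_iff₀ (by positivity)]
      nlinarith [hηmax.le]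
    exact le_antisymm (hcon _ h1 h2) (zero_le)
  have hcover : Dset ∩ ball c r ⊆ ⋃ k : ℕ, Dset ∩ closedBall c (r - ηmax / (k + 1)) := by
    rintro y ⟨hyD, hyB⟩
    have hd : dist y c < r := mem_ball.mp hyB
    obtain ⟨k, hk⟩ := exists_nat_gt (ηmax / (r - dist y c))
    refine Set.mem_iUnion.mpr ⟨k, hyD, mem_closedBall.mpr ?_⟩
    have hpos' : 0 < r - dist y c := by linarith
    have h2 : ηmax / (r - dist y c) < (k : ℝ) + 1 := by linarith
    have h3 : ηmax < ((k:ℝ) + 1) * (r - dist y c) := by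
      have := (div_lt_iff₀ hpos').mp h2
      linarith
    have h4 : ηmax / ((k:ℝ) + 1) < r - dist y c := by
      rw [div_lt_iff₀ (by positivity)]
      linarith
    linarith
  have hz : μ (Dset ∩ ball c r) = 0 :=
    measure_mono_null hcover (measure_iUnion_null hterm)
  have : μ Dset = 0 := by
    have h := measure_le_inter_add_diff μ Dset (ball c r)
    rw [hz, hnull] at h
    simpa using h
  exact absurd this hpos.ne'

end NoMidSeqAux

open Topology

set_option maxHeartbeats 2000000

/-- For an atomless measure with coinciding maximal operators, there is no sequence in the
support in which each `x (n+2)` is a metric midpoint of `x n` and `x (n+1)`, with all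
points distinct and converging to a support point. -/
theorem no_midpoint_sequence {X : Type*} [MetricSpace X] [MeasurableSpace X] [BorelSpace X]
    (μ : Measure X) (hfin : ∀ (c : X) (r : ℝ), μ (closedBall c r) ≠ ∞)
    (hsupp : (suppM μ).Nonempty) (hatomless : ∀ p : X, μ {p} = 0)
    (hM : ∀ f : X → ℝ≥0∞, Measurable f →
      (∀ (c : X) (r : ℝ), (∫⁻ z in closedBall c r, f z ∂μ) ≠ ∞) →
      ∀ z ∈ suppM μ, Mc μ f z = Munc μ f z) :
    ¬ ∃ x : ℕ → X,
      (∀ n, x n ∈ suppM μ) ∧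
      Function.Injective x ∧
      (∀ n, dist (x n) (x (n + 2)) = dist (x n) (x (n + 1)) / 2 ∧
            dist (x (n + 1)) (x (n + 2)) = dist (x n) (x (n + 1)) / 2) ∧
      (∃ x0 ∈ suppM μ, Tendsto x atTop (nhds x0)) := by
  rintro ⟨x, hxsupp, hinj, hmid, x0, hx0, hlim⟩
  -- ### distance setup
  set d : ℕ → ℝ := fun n => dist (x n) (x (n+1)) with hd_def
  have hds : ∀ n, d (n+1) = d n / 2 := fun n => (hmid n).2
  have hd2 : ∀ n, dist (x n) (x (n+2)) = d n / 2 := fun n => (hmid n).1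
  have hd0pos : 0 < d 0 := dist_pos.mpr fun h => by simpa using hinj h
  have hdpos : ∀ n, 0 < d n := by
    intro n
    induction n with
    | zero => exact hd0pos
    | succ n ih => rw [hds]; linarith
  set e : ℕ → ℝ := fun n => dist (x n) x0 with he_def
  have he_tendsto : Tendsto e atTop (𝓝 0) := by
    have := hlim.dist (tendsto_const_nhds (x := x0))
    simpa using this
  have htri : ∀ n, e n ≤ d n / 2 + e (n+2) := by
    intro n
    have := dist_triangle (x n) (x (n+2)) x0
    rw [hd2 n] at this
    exact this
  have key : ∀ k n, e n ≤ 2/3 * d n * (1 - (1/4:ℝ)^k) + e (n + 2*k) := by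
    intro k
    induction k with
    | zero => intro n; simp
    | succ k ih =>
      intro n
      have h1 := htri n
      have h2 := ih (n+2)
      have hd4 : d (n+2) = d n / 4 := by rw [hds, hds]; ring
      have harr : n + 2 + 2*k = n + 2*(k+1) := by ring
      rw [hd4, harr] at h2
      rw [pow_succ]
      linarith [h2, h1]
  have he_upper : ∀ n, e n ≤ 2/3 * d n := by
    intro n
    have t1 : Tendsto (fun k : ℕ => (1/4:ℝ)^k) atTop (𝓝 0) :=
      tendsto_pow_atTop_nhds_zero_of_lt_one (by norm_num) (by norm_num)
    have t2 : Tendsto (fun k : ℕ => e (n + 2*k)) atTop (𝓝 0) := by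
      refine he_tendsto.comp ?_
      exact tendsto_atTop_atTop.mpr fun b => ⟨b, fun a ha => by omega⟩
    have t3 : Tendsto (fun k : ℕ => 2/3 * d n * (1 - (1/4:ℝ)^k) + e (n + 2*k)) atTop
        (𝓝 (2/3 * d n * (1 - 0) + 0)) :=
      (((tendsto_const_nhds (x := (2/3 * d n : ℝ))).mul
        ((tendsto_const_nhds (x := (1:ℝ))).sub t1)).add t2)
    simp only [sub_zero, mul_one, add_zero] at t3
    exact ge_of_tendsto' t3 (fun k => key k n)
  have he_eq : ∀ n, e n = 2/3 * d n := by
    intro n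
    have hlow : d n ≤ e n + e (n+1) := by
      have h := dist_triangle (x n) x0 (x (n+1))
      have hc : dist x0 (x (n+1)) = e (n+1) := dist_comm x0 (x (n+1))
      rw [hc] at h
      exact h
    have h2 := he_upper (n+1)
    rw [hds n] at h2
    have h3 := he_upper n
    linarith
  -- dist symm helpers
  have hdist_n2 : ∀ n, dist (x (n+2)) (x n) = d n / 2 := fun n => by
    rw [dist_comm]; exact hd2 n
  have hdist_succ : ∀ n, dist (x n) (x (n+1)) = d n := fun n => rfl
  have he0 : ∀ n, dist (x n) x0 = 2/3 * d n := fun n => he_eq n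
  have he0' : ∀ n, dist x0 (x n) = 2/3 * d n := fun n => by rw [dist_comm]; exact he_eq n
  -- ### the key a.e.-inside lemma (E_n)
  have hE : ∀ n, ∃ ε : ℝ, 0 < ε ∧
      μ (closedBall (x n) ε \ ball (x (n+2)) (d n / 2)) = 0 := by
    intro n
    by_contra hcon
    push_neg at hcon
    -- (*1)
    have h1 : μ (closedBall (x (n+2)) (d n / 2)) ≤ μ (closedBall (x n) (d n / 2)) := by
      refine NoMidSeqAux.test_lemma μ hfin hM
        (A := closedBall (x n) (d n/2) \ ball (x (n+2)) (d n/2))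
        (p := x (n+2)) (c := x n) (ρ := d n / 2) (s := d n / 2)
        (measurableSet_closedBall.diff measurableSet_ball) ?_ (by linarith [hdpos n])
        (by linarith [hdpos n]) (hxsupp (n+2)) ?_ Set.diff_subset ?_
      · exact pos_iff_ne_zero.mpr (hcon (d n/2) (by linarith [hdpos n]))
      · rintro y ⟨-, hy2⟩
        rw [dist_comm]
        exact not_lt.mp fun hlt => hy2 (mem_ball.mpr hlt)
      · exact mem_closedBall.mpr (le_of_eq (hdist_n2 n))
    -- (*2)
    have h2 : ∀ ε' : ℝ, 0 < ε' → ε' < d n →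
        μ (closedBall (x n) (d n - ε')) ≤ μ (closedBall (x (n+2)) (d n / 2 + ε')) := by
      intro ε' h0 hlt
      refine NoMidSeqAux.test_lemma μ hfin hM
        (A := closedBall (x (n+1)) ε')
        (p := x n) (c := x (n+2)) (ρ := d n - ε') (s := d n / 2 + ε')
        measurableSet_closedBall ?_ (by linarith) (by linarith [hdpos n])
        (hxsupp n) ?_ ?_ ?_
      · exact lt_of_lt_of_le (hxsupp (n+1) ε' h0) (measure_mono ball_subset_closedBall)
      · intro y hy
        have hy' : dist y (x (n+1)) ≤ ε' := mem_closedBall.mp hy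
        have := dist_triangle (x n) y (x (n+1))
        have hdn : dist (x n) (x (n+1)) = d n := rfl
        rw [hdn] at this
        have : d n - ε' ≤ dist (x n) y := by linarith
        exact this
      · intro y hy
        have hy' : dist y (x (n+1)) ≤ ε' := mem_closedBall.mp hy
        have htr := dist_triangle y (x (n+1)) (x (n+2))
        have hstep : dist (x (n+1)) (x (n+2)) = d n / 2 := hds n
        rw [hstep] at htr
        exact mem_closedBall.mpr (by linarith)
      · exact mem_closedBall.mpr (by rw [hd2 n]; linarith)
    -- continuity from above
    have h3 : μ (closedBall (x n) (3/4 * d n)) ≤ μ (closedBall (x (n+2)) (d n / 2)) := by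
      have hanti : Antitone (fun k : ℕ => closedBall (x (n+2)) (d n/2 + (d n/8)/(k+1))) := by
        intro a b hab
        apply closedBall_subset_closedBall
        have : (a:ℝ) + 1 ≤ (b:ℝ) + 1 := by exact_mod_cast by omega
        have h8 : 0 < d n / 8 := by linarith [hdpos n]
        have := div_le_div_of_nonneg_left h8.le (by positivity : (0:ℝ) < (a:ℝ)+1) this
        linarith
      have hiInter : (⋂ k : ℕ, closedBall (x (n+2)) (d n/2 + (d n/8)/((k:ℝ)+1)))
          = closedBall (x (n+2)) (d n/2) := by
        ext y
        simp only [Set.mem_iInter, mem_closedBall]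
        constructor
        · intro h
          by_contra hlt
          push_neg at hlt
          obtain ⟨k, hk⟩ := exists_nat_gt ((d n/8) / (dist y (x (n+2)) - d n/2))
          have hpos' : 0 < dist y (x (n+2)) - d n/2 := by linarith
          have h2' : (d n/8) / (dist y (x (n+2)) - d n/2) < (k:ℝ) + 1 := by linarith
          have h3' : (d n/8) < ((k:ℝ)+1) * (dist y (x (n+2)) - d n/2) := by
            have := (div_lt_iff₀ hpos').mp h2'
            linarith
          have h4' : (d n/8)/((k:ℝ)+1) < dist y (x (n+2)) - d n/2 := by
            rw [div_lt_iff₀ (by positivity)]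
            linarith
          have := h k
          linarith
        · intro h k
          have h8 : 0 ≤ (d n / 8)/((k:ℝ)+1) := by positivity
          linarith
      have htd := tendsto_measure_iInter_atTop
        (fun k => measurableSet_closedBall.nullMeasurableSet) hanti ⟨0, hfin _ _⟩
      rw [hiInter] at htd
      refine ge_of_tendsto' htd fun k => ?_
      show μ (closedBall (x n) (3/4 * d n)) ≤ μ (closedBall (x (n+2)) (d n / 2 + (d n/8)/((k:ℝ)+1)))
      have hd8 : 0 < d n / 8 := by linarith [hdpos n]
      have hε'pos : 0 < (d n/8)/((k:ℝ)+1) := div_pos hd8 (by positivity)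
      have hε'le : (d n/8)/((k:ℝ)+1) ≤ d n / 8 := by
        rw [div_le_iff₀ (by positivity)]
        nlinarith [hdpos n]
      calc μ (closedBall (x n) (3/4 * d n))
          ≤ μ (closedBall (x n) (d n - (d n/8)/((k:ℝ)+1))) := by
            apply measure_mono
            apply closedBall_subset_closedBall
            linarith [hdpos n]
        _ ≤ μ (closedBall (x (n+2)) (d n / 2 + (d n/8)/((k:ℝ)+1))) :=
            h2 _ hε'pos (by linarith [hdpos n])
    -- annulus contradiction
    have hsub : ball x0 (d n/24) ⊆
        closedBall (x n) (3/4 * d n) \ closedBall (x n) (d n/2) := by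
      intro y hy
      have hy' : dist y x0 < d n / 24 := mem_ball.mp hy
      have htr1 := dist_triangle y x0 (x n)
      have htr2 := dist_triangle (x n) y x0
      rw [he0' n] at htr1
      rw [he0 n] at htr2
      constructor
      · exact mem_closedBall.mpr (by rw [dist_comm] at htr1 ⊢; linarith)
      · intro hmem
        have : dist y (x n) ≤ d n / 2 := mem_closedBall.mp hmem
        rw [dist_comm] at this
        linarith [hdpos n]
    have hdisj : Disjoint (closedBall (x n) (d n/2)) (ball x0 (d n/24)) := by
      rw [Set.disjoint_right]
      intro y hy
      exact (hsub hy).2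
    have hplus : μ (closedBall (x n) (d n/2)) + μ (ball x0 (d n/24))
        ≤ μ (closedBall (x n) (3/4 * d n)) := by
      rw [← measure_union hdisj measurableSet_ball]
      apply measure_mono
      rintro y (hy | hy)
      · exact closedBall_subset_closedBall (by linarith [hdpos n]) hy
      · exact (hsub hy).1
    have hzero : μ (ball x0 (d n/24)) = 0 := by
      have hle : μ (closedBall (x n) (d n/2)) + μ (ball x0 (d n/24))
          ≤ μ (closedBall (x n) (d n/2)) + 0 := by
        rw [add_zero]
        exact hplus.trans (h3.trans h1)
      exact le_zero_iff.mp ((ENNReal.add_le_add_iff_left (hfin _ _)).mp hle)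
    exact absurd (hx0 (d n/24) (by linarith [hdpos n])) (by simp [hzero])
  -- ### LEM-B: μ(cB(x(n+2), d n/2 − η)) ≤ μ(cB(x(n+3), d n/4 + η))
  have hB : ∀ n (η : ℝ), 0 < η → η < d n / 2 →
      μ (closedBall (x (n+2)) (d n / 2 - η)) ≤ μ (closedBall (x (n+3)) (d n / 4 + η)) := by
    intro n η h0 hlt
    have hd34 : dist (x (n+2)) (x (n+3)) = d n / 4 := by
      have := hds (n+1)
      have h' : d (n+2) = d n / 4 := by rw [hds, hds]; ring
      show dist (x (n+2)) (x (n+2+1)) = d n / 4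
      exact h'
    have hd13 : dist (x (n+1)) (x (n+3)) = d n / 4 := by
      have := hd2 (n+1)
      rw [hds n] at this
      show dist (x (n+1)) (x (n+1+2)) = d n / 4
      rw [this]; ring
    have hd12 : dist (x (n+1)) (x (n+2)) = d n / 2 := hds n
    refine NoMidSeqAux.test_lemma μ hfin hM
      (A := closedBall (x (n+1)) η)
      (p := x (n+2)) (c := x (n+3)) (ρ := d n / 2 - η) (s := d n / 4 + η)
      measurableSet_closedBall
      (lt_of_lt_of_le (hxsupp (n+1) η h0) (measure_mono ball_subset_closedBall))
      (by linarith) (by linarith [hdpos n]) (hxsupp (n+2)) ?_ ?_ ?_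
    · intro y hy
      have hy' : dist y (x (n+1)) ≤ η := mem_closedBall.mp hy
      have h12 : dist (x (n+2)) (x (n+1)) = d n / 2 := by rw [dist_comm]; exact hd12
      have : d n / 2 ≤ dist (x (n+2)) y + η := by
        calc d n / 2 = dist (x (n+2)) (x (n+1)) := h12.symm
          _ ≤ dist (x (n+2)) y + dist y (x (n+1)) := dist_triangle _ _ _
          _ ≤ dist (x (n+2)) y + η := by linarith
      linarith
    · intro y hy
      have hy' : dist y (x (n+1)) ≤ η := mem_closedBall.mp hy
      refine mem_closedBall.mpr ?_
      calc dist y (x (n+3)) ≤ dist y (x (n+1)) + dist (x (n+1)) (x (n+3)) := dist_triangle _ _ _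
        _ ≤ η + d n / 4 := by rw [hd13]; linarith
        _ = d n / 4 + η := by ring
    · exact mem_closedBall.mpr (by rw [hd34]; linarith)
  -- ### LEM-C inclusion
  have hC : ∀ n (η : ℝ), 0 ≤ η →
      closedBall (x (n+3)) (d n / 4 + η) ⊆ closedBall x0 (d n / 3 + η) := by
    intro n η h0 y hy
    have hy' : dist y (x (n+3)) ≤ d n / 4 + η := mem_closedBall.mp hy
    have he3 : dist (x (n+3)) x0 = d n / 12 := by
      have := he0 (n+3)
      have hdn3 : d (n+3) = d n / 8 := by rw [hds, hds, hds]; ring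
      rw [hdn3] at this
      rw [this]; ring
    refine mem_closedBall.mpr ?_
    calc dist y x0 ≤ dist y (x (n+3)) + dist (x (n+3)) x0 := dist_triangle _ _ _
      _ ≤ d n / 4 + η + d n / 12 := by rw [he3]; linarith
      _ = d n / 3 + η := by ring
  -- ### main descent inequality M_n
  have hMineq : ∀ n (ε δ : ℝ), 0 < ε → 0 < δ →
      μ (closedBall x0 (2/3 * d n - δ)) ≤ μ (closedBall x0 (1/3 * d n + ε)) := by
    intro n ε δ hε hδ
    obtain ⟨ε₂, hε₂pos, hε₂null⟩ := hE n
    set δ₁ := min (min δ ε₂) (d n / 3) with hδ₁_def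
    have hδ₁pos : 0 < δ₁ := lt_min (lt_min hδ hε₂pos) (by linarith [hdpos n])
    have hδ₁δ : δ₁ ≤ δ := le_trans (min_le_left _ _) (min_le_left _ _)
    have hδ₁ε₂ : δ₁ ≤ ε₂ := le_trans (min_le_left _ _) (min_le_right _ _)
    have hδ₁d : δ₁ ≤ d n / 3 := min_le_right _ _
    -- find η with positive trimmed mass
    have hnull : μ (closedBall (x n) δ₁ \ ball (x (n+2)) (d n / 2)) = 0 :=
      measure_mono_null
        (Set.diff_subset_diff_left (closedBall_subset_closedBall hδ₁ε₂)) hε₂null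
    have hbpos : 0 < μ (closedBall (x n) δ₁) :=
      lt_of_lt_of_le (hxsupp n δ₁ hδ₁pos) (measure_mono ball_subset_closedBall)
    obtain ⟨η, hη0, hηle, hWpos⟩ :=
      NoMidSeqAux.pos_inter_shrunk μ (ηmax := min ε (d n / 8))
        (lt_min hε (by linarith [hdpos n])) hbpos hnull
    have hηε : η ≤ ε := hηle.trans (min_le_left _ _)
    have hη8 : η ≤ d n / 8 := hηle.trans (min_le_right _ _)
    -- descent via TL at x0
    have hdesc : μ (closedBall x0 (2/3 * d n - δ₁)) ≤
        μ (closedBall (x (n+2)) (d n / 2 - η)) := by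
      refine NoMidSeqAux.test_lemma μ hfin hM
        (A := closedBall (x n) δ₁ ∩ closedBall (x (n+2)) (d n / 2 - η))
        (p := x0) (c := x (n+2)) (ρ := 2/3 * d n - δ₁) (s := d n / 2 - η)
        (measurableSet_closedBall.inter measurableSet_closedBall) hWpos
        (by linarith [hdpos n]) (by linarith [hdpos n]) hx0 ?_
        Set.inter_subset_right ?_
      · rintro y ⟨hy1, -⟩
        have hy' : dist y (x n) ≤ δ₁ := mem_closedBall.mp hy1
        have htr := dist_triangle x0 y (x n)
        have h0' : dist x0 (x n) = 2/3 * d n := he0' n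
        rw [dist_comm y (x n)] at htr
        have : 2/3 * d n ≤ dist x0 y + δ₁ := by
          calc 2/3 * d n = dist x0 (x n) := h0'.symm
            _ ≤ dist x0 y + dist y (x n) := dist_triangle _ _ _
            _ ≤ dist x0 y + δ₁ := by linarith
        linarith
      · refine mem_closedBall.mpr ?_
        have h02 : dist x0 (x (n+2)) = d n / 6 := by
          have := he0' (n+2)
          have hdn2 : d (n+2) = d n / 4 := by rw [hds, hds]; ring
          rw [hdn2] at this
          rw [this]; ring
        rw [h02]
        linarith [hdpos n]
    calc μ (closedBall x0 (2/3 * d n - δ))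
        ≤ μ (closedBall x0 (2/3 * d n - δ₁)) :=
          measure_mono (closedBall_subset_closedBall (by linarith))
      _ ≤ μ (closedBall (x (n+2)) (d n / 2 - η)) := hdesc
      _ ≤ μ (closedBall (x (n+3)) (d n / 4 + η)) := hB n η hη0 (by linarith [hdpos n])
      _ ≤ μ (closedBall x0 (d n / 3 + η)) := measure_mono (hC n η hη0.le)
      _ ≤ μ (closedBall x0 (1/3 * d n + ε)) :=
          measure_mono (closedBall_subset_closedBall (by linarith))
  -- ### FINAL contradiction at level m = 0
  have hd1 : d 1 = d 0 / 2 := hds 0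
  have hd2'' : d 2 = d 0 / 4 := by rw [hds, hds]; ring
  have hd3'' : d 3 = d 0 / 8 := by rw [hds, hds, hds]; ring
  set E1 : ℝ := 2/3 * d 1 with hE1def
  set E2 : ℝ := 2/3 * d 2 with hE2def
  have hE1pos : 0 < E1 := by rw [hE1def]; linarith [hdpos 1]
  have hE2pos : 0 < E2 := by rw [hE2def]; linarith [hdpos 2]
  have hE2E1 : E2 = E1 / 2 := by rw [hE1def, hE2def, hd2'', hd1]; ring
  obtain ⟨ε₂, hε₂pos, hε₂null⟩ := hE 1
  set δ : ℝ := min ε₂ (E2/4) with hδdef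
  have hδpos : 0 < δ := lt_min hε₂pos (by linarith)
  have hδε₂ : δ ≤ ε₂ := min_le_left _ _
  have hδE2 : δ ≤ E2/4 := min_le_right _ _
  set bump := closedBall (x 1) δ with hbumpdef
  have hbumppos : 0 < μ bump :=
    lt_of_lt_of_le (hxsupp 1 δ hδpos) (measure_mono ball_subset_closedBall)
  have hx1loc : dist (x 1) x0 = E1 := by rw [hE1def]; exact he0 1
  -- annulus null facts
  have hAN0 : ∀ ε : ℝ, 0 < ε → μ (ball x0 (2/3 * d 0) \ closedBall x0 (E1 + ε)) = 0 := by
    intro ε hε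
    refine NoMidSeqAux.diff_null_of_forall μ hfin x0 fun δ' hδ' => ?_
    have h := hMineq 0 ε δ' hε hδ'
    have : (1:ℝ)/3 * d 0 + ε = E1 + ε := by rw [hE1def, hd1]; ring
    rwa [this] at h
  have hAN1 : ∀ ε : ℝ, 0 < ε → μ (ball x0 E1 \ closedBall x0 (E2 + ε)) = 0 := by
    intro ε hε
    refine NoMidSeqAux.diff_null_of_forall μ hfin x0 fun δ' hδ' => ?_
    have h := hMineq 1 ε δ' hε hδ'
    have h1' : (1:ℝ)/3 * d 1 + ε = E2 + ε := by rw [hE2def, hd2'', hd1]; ring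
    have h2' : (2:ℝ)/3 * d 1 - δ' = E1 - δ' := by rw [hE1def]
    rwa [h1', h2'] at h
  -- Step 1: bump is a.e. within closedBall x0 E1
  have hstep1 : μ (bump \ closedBall x0 E1) = 0 := by
    have hcover : bump \ closedBall x0 E1 ⊆
        ⋃ k : ℕ, (ball x0 (2/3 * d 0) \ closedBall x0 (E1 + E1/(k+1))) := by
      rintro y ⟨hy1, hy2⟩
      have hy1' : dist y (x 1) ≤ δ := mem_closedBall.mp hy1
      have hy2' : E1 < dist y x0 := by
        by_contra hle
        exact hy2 (mem_closedBall.mpr (not_lt.mp hle))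
      have hyup : dist y x0 ≤ E1 + δ := by
        calc dist y x0 ≤ dist y (x 1) + dist (x 1) x0 := dist_triangle _ _ _
          _ ≤ δ + E1 := by rw [hx1loc]; linarith
          _ = E1 + δ := by ring
      obtain ⟨k, hk⟩ := exists_nat_gt (E1 / (dist y x0 - E1))
      refine Set.mem_iUnion.mpr ⟨k, ?_, ?_⟩
      · refine mem_ball.mpr ?_
        have : E1 + δ < 2/3 * d 0 := by
          have : (2:ℝ)/3 * d 0 = 2 * E1 := by rw [hE1def, hd1]; ring
          rw [this]
          linarith
        linarith
      · intro hmem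
        have hmem' : dist y x0 ≤ E1 + E1/((k:ℝ)+1) := mem_closedBall.mp hmem
        have hpos' : 0 < dist y x0 - E1 := by linarith
        have h2' : E1 / (dist y x0 - E1) < (k:ℝ) + 1 := by linarith
        have h3' : E1 < ((k:ℝ)+1) * (dist y x0 - E1) := by
          have := (div_lt_iff₀ hpos').mp h2'
          linarith
        have h4' : E1/((k:ℝ)+1) < dist y x0 - E1 := by
          rw [div_lt_iff₀ (by positivity)]
          linarith
        linarith
    refine measure_mono_null hcover (measure_iUnion_null fun k => ?_)
    exact hAN0 _ (by positivity)
  -- Step 2: bump is a.e. outside ball x0 E1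
  have hstep2 : μ (bump ∩ ball x0 E1) = 0 := by
    have hcov : bump ∩ ball x0 E1 ⊆ ball x0 E1 \ closedBall x0 (E2 + E2/2) := by
      rintro y ⟨hy1, hy2⟩
      refine ⟨hy2, fun hmem => ?_⟩
      have hy1' : dist y (x 1) ≤ δ := mem_closedBall.mp hy1
      have hlow : E1 - δ ≤ dist y x0 := by
        have : E1 ≤ dist (x 1) y + dist y x0 := by
          rw [← hx1loc]
          exact dist_triangle _ _ _
        rw [dist_comm (x 1) y] at this
        linarith
      have hmem' : dist y x0 ≤ E2 + E2/2 := mem_closedBall.mp hmem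
      rw [hE2E1] at hmem' hδE2
      linarith
    exact measure_mono_null hcov (hAN1 (E2/2) (by linarith))
  -- Step 3: the exact sphere captures the bump
  set Sse := closedBall x0 E1 \ ball x0 E1 with hSdef
  have hstep3 : μ (bump \ Sse) = 0 := by
    have hcov : bump \ Sse ⊆ (bump \ closedBall x0 E1) ∪ (bump ∩ ball x0 E1) := by
      rintro y ⟨hy1, hy2⟩
      rw [hSdef] at hy2
      by_cases hc : y ∈ closedBall x0 E1
      · right
        refine ⟨hy1, ?_⟩
        by_contra hb
        exact hy2 ⟨hc, hb⟩
      · left; exact ⟨hy1, hc⟩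
    exact measure_mono_null hcov (measure_union_null hstep1 hstep2)
  set Dset := bump ∩ Sse with hDdef
  have hDpos : 0 < μ Dset := by
    have h := measure_le_inter_add_diff μ bump Sse
    rw [hstep3, add_zero] at h
    exact lt_of_lt_of_le hbumppos h
  have hDmeas : MeasurableSet Dset :=
    measurableSet_closedBall.inter (measurableSet_closedBall.diff measurableSet_ball)
  -- Step 4: trim inside ball (x 3) (d 2)
  have hball_eq : ball (x 3) (d 1 / 2) = ball (x 3) (d 2) := by rw [hds 1]
  have hDnull : μ (Dset \ ball (x 3) (d 2)) = 0 := by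
    rw [← hball_eq]
    refine measure_mono_null (Set.diff_subset_diff_left ?_) hε₂null
    exact Set.inter_subset_left.trans (closedBall_subset_closedBall hδε₂)
  obtain ⟨η, hη0, hηle, hWpos⟩ :=
    NoMidSeqAux.pos_inter_shrunk μ (ηmax := min (d 2 / 2) (E2/2))
      (lt_min (by linarith [hdpos 2]) (by linarith)) hDpos hDnull
  have hηd2 : η ≤ d 2 / 2 := hηle.trans (min_le_left _ _)
  have hηE2 : η ≤ E2/2 := hηle.trans (min_le_right _ _)
  -- Step 5: closed ball of radius E1 at x0 has measure at most the trimmed ball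
  have h5 : μ (closedBall x0 E1) ≤ μ (closedBall (x 3) (d 2 - η)) := by
    refine NoMidSeqAux.test_lemma μ hfin hM
      (A := Dset ∩ closedBall (x 3) (d 2 - η))
      (p := x0) (c := x 3) (ρ := E1) (s := d 2 - η)
      (hDmeas.inter measurableSet_closedBall) hWpos hE1pos
      (by linarith [hdpos 2]) hx0 ?_ Set.inter_subset_right ?_
    · rintro y ⟨⟨-, hyS⟩, -⟩
      rw [hSdef] at hyS
      have : ¬ dist y x0 < E1 := fun hlt => hyS.2 (mem_ball.mpr hlt)
      rw [dist_comm]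
      exact not_lt.mp this
    · refine mem_closedBall.mpr ?_
      have h03 : dist x0 (x 3) = d 2 / 3 := by
        have := he0' 3
        rw [hd3''] at this
        rw [this, hd2'']; ring
      rw [h03]
      linarith [hdpos 2, hηd2]
  -- Step 6
  have h6 : μ (closedBall (x 3) (d 2 - η)) ≤ μ (closedBall (x 4) (d 3 + η)) := by
    have h := hB 1 η hη0 (by rw [hd1]; rw [hd2''] at hηd2; linarith [hdpos 0])
    have e1 : d 1 / 2 = d 2 := (hds 1).symm
    have e2 : d 1 / 4 = d 3 := by rw [hd1, hd3'']; ring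
    rw [e1, e2] at h
    exact h
  -- Step 7
  have h7 : closedBall (x 4) (d 3 + η) ⊆ ball x0 E1 := by
    intro y hy
    have h := hC 1 η hη0.le
    have e2 : d 1 / 4 = d 3 := by rw [hd1, hd3'']; ring
    rw [e2] at h
    have hy' := h hy
    have hy'' : dist y x0 ≤ d 1 / 3 + η := mem_closedBall.mp hy'
    refine mem_ball.mpr ?_
    have : d 1 / 3 = E2 := by rw [hE2def, hd2'', hd1]; ring
    rw [this] at hy''
    rw [hE2E1] at hy'' hηE2
    linarith
  -- conclude
  have h8 : μ (closedBall x0 E1) ≤ μ (ball x0 E1) :=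
    h5.trans (h6.trans (measure_mono h7))
  have hballfin : μ (ball x0 E1) ≠ ∞ :=
    fun h => (hfin x0 E1) (top_le_iff.mp (h ▸ measure_mono ball_subset_closedBall))
  have h9 : μ Sse = 0 := by
    rw [hSdef, measure_diff ball_subset_closedBall measurableSet_ball.nullMeasurableSet hballfin]
    exact tsub_eq_zero_of_le h8
  have : μ Dset = 0 :=
    le_antisymm (h9 ▸ measure_mono Set.inter_subset_right) (zero_le)
  exact absurd this hDpos.ne'
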